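/- Let a^{[k]}_j, j ∈ ℤ, k ∈ ℕ₀, be complex masks with symbols a^{[k]}(z) = ∑_{j∈ℤ} a^{[k]}_j z^j, and suppose: (i) there is a fixed integer N > 0 with a^{[k]}_j = 0 for all |j| ≥ N and all k; (ii) there is M > 0 with |a^{[k]}(e^{iω})| ≤ M for all k ∈ ℕ₀ and all ω ∈ ℝ, and ∑_{k=0}^{∞} |(1/2)·a^{[k]}(1) - 1| < ∞. Then the infinite product ∏_{k=1}^{∞} (1/2)·a^{[k-1]}(e^{iω·2^{-k}}), i.e., the sequence of partial products P_K(ω) = ∏_{k=1}^{K} (1/2)·a^{[k-1]}(e^{iω·2^{-k}}), converges uniformly on every compact subset of ℝ (as functions of ω). -/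

import Mathlib

open Filter Topology

/-- The symbol of the mask `mask` (supported in `{-N,…,N}`): the Laurent polynomial
`∑_{j=-N}^{N} mask j · z^j`. -/
noncomputable def symbol (N : ℕ) (mask : ℤ → ℂ) (z : ℂ) : ℂ :=
  ∑ j ∈ Finset.Icc (-(N : ℤ)) (N : ℤ), mask j * z ^ j

/-- `|e^{is} - 1| ≤ 2|s|` for real `s`. -/
lemma expI_sub_one_bound (s : ℝ) :
    ‖Complex.exp (Complex.I * s) - 1‖ ≤ 2 * |s| := by
  rcases le_or_gt |s| 1 with h | h
  · have h2 : ‖Complex.I * s‖ = |s| := by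
      simp
    have := Complex.norm_exp_sub_one_le (x := Complex.I * s) (by rw [h2]; exact h)
    rwa [h2] at this
  · have h1 : ‖Complex.exp (Complex.I * s)‖ = 1 := by
      rw [mul_comm]; exact Complex.norm_exp_ofReal_mul_I s
    calc ‖Complex.exp (Complex.I * s) - 1‖
        ≤ ‖Complex.exp (Complex.I * s)‖ + ‖(1:ℂ)‖ := by
          simpa using norm_sub_le (Complex.exp (Complex.I * s)) 1
      _ = 2 := by rw [h1]; simp; norm_num
      _ ≤ 2 * |s| := by nlinarith
/-- Per-term integral over `[0, 2π]` of `exp(((m-j) I) ω)`. -/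
lemma exp_term_integral (m j : ℤ) :
    (∫ ω in (0:ℝ)..(2*Real.pi), Complex.exp ((((m - j : ℤ) : ℂ) * Complex.I) * ω))
      = if m = j then ((2*Real.pi : ℝ) : ℂ) else 0 := by
  rcases eq_or_ne m j with rfl | hmj
  · simp
  · rw [if_neg hmj]
    have hc : ((m - j : ℤ) : ℂ) * Complex.I ≠ 0 := by
      refine mul_ne_zero ?_ Complex.I_ne_zero
      exact_mod_cast sub_ne_zero.mpr hmj
    rw [integral_exp_mul_complex hc]
    have h1 : Complex.exp (((m - j : ℤ) : ℂ) * Complex.I * ((2*Real.pi : ℝ):ℂ)) = 1 := by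
      have := Complex.exp_int_mul_two_pi_mul_I (m - j)
      rw [← this]; congr 1; push_cast; ring
    rw [h1]
    simp

/-- Fourier coefficient bound: if the symbol is bounded by `M` on the unit circle,
then each mask coefficient is bounded by `M`. -/
lemma coeff_bound (N : ℕ) (mask : ℤ → ℂ) (M : ℝ)
    (hb : ∀ ω : ℝ, ‖symbol N mask (Complex.exp (Complex.I * ω))‖ ≤ M)
    (j : ℤ) (hj : j ∈ Finset.Icc (-(N:ℤ)) (N:ℤ)) :
    ‖mask j‖ ≤ M := by
  set g : ℝ → ℂ := fun ω =>
    symbol N mask (Complex.exp (Complex.I * ω)) * Complex.exp (-(Complex.I * j * ω)) with hg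
  have hrw : ∀ ω : ℝ, g ω
      = ∑ m ∈ Finset.Icc (-(N:ℤ)) (N:ℤ),
          mask m * Complex.exp ((((m - j : ℤ) : ℂ) * Complex.I) * ω) := by
    intro ω
    rw [hg]
    simp only [symbol, Finset.sum_mul]
    refine Finset.sum_congr rfl fun m _ => ?_
    rw [mul_assoc]
    congr 1
    rw [← Complex.exp_int_mul, ← Complex.exp_add]
    congr 1
    push_cast
    ring
  have key : (∫ ω in (0:ℝ)..(2*Real.pi), g ω) = ((2*Real.pi : ℝ) : ℂ) * mask j := by
    rw [intervalIntegral.integral_congr (g := fun ω =>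
      ∑ m ∈ Finset.Icc (-(N:ℤ)) (N:ℤ),
        mask m * Complex.exp ((((m - j : ℤ) : ℂ) * Complex.I) * ω))
      (fun ω _ => hrw ω)]
    rw [intervalIntegral.integral_finset_sum]
    · have : ∀ m ∈ Finset.Icc (-(N:ℤ)) (N:ℤ),
          (∫ ω in (0:ℝ)..(2*Real.pi), mask m * Complex.exp ((((m - j : ℤ) : ℂ) * Complex.I) * ω))
            = if m = j then mask m * ((2*Real.pi : ℝ) : ℂ) else 0 := by
        intro m _
        rw [intervalIntegral.integral_const_mul, exp_term_integral]
        split_ifs <;> simp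
      rw [Finset.sum_congr rfl this, Finset.sum_ite_eq' _ j _]
      rw [if_pos hj]; ring
    · intro m _
      apply Continuous.intervalIntegrable
      fun_prop
  have hnorm : ∀ ω ∈ Set.uIoc (0:ℝ) (2*Real.pi), ‖g ω‖ ≤ M := by
    intro ω _
    rw [hg]
    have h1 : ‖Complex.exp (-(Complex.I * j * ω))‖ = 1 := by
      rw [Complex.norm_exp]
      have : (-(Complex.I * (j:ℂ) * (ω:ℂ))).re = 0 := by simp
      rw [this, Real.exp_zero]
    calc ‖symbol N mask (Complex.exp (Complex.I * ω)) * Complex.exp (-(Complex.I * j * ω))‖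
        = ‖symbol N mask (Complex.exp (Complex.I * ω))‖
            * ‖Complex.exp (-(Complex.I * j * ω))‖ := by
          simp
      _ ≤ M := by rw [h1, mul_one]; exact hb ω
  have hint := intervalIntegral.norm_integral_le_of_norm_le_const hnorm
  rw [key] at hint
  have h2pi : (0:ℝ) < 2 * Real.pi := by positivity
  have hL : ‖((2*Real.pi : ℝ) : ℂ) * mask j‖ = (2*Real.pi) * ‖mask j‖ := by
    rw [norm_mul, Complex.norm_real, Real.norm_eq_abs, abs_of_pos h2pi]
  rw [hL] at hint
  have hR : M * |2*Real.pi - 0| = M * (2*Real.pi) := by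
    rw [sub_zero, abs_of_pos h2pi]
  rw [hR] at hint
  nlinarith [hint]

/-- If `|g i - 1| ≤ u i` on `s` with `u ≥ 0`, then `|∏ g - 1| ≤ ∏ (1+u) - 1`. -/
lemma prod_sub_one_bound (s : Finset ℕ) (g : ℕ → ℂ) (u : ℕ → ℝ) (hu : ∀ i, 0 ≤ u i)
    (h : ∀ i ∈ s, ‖g i - 1‖ ≤ u i) :
    ‖∏ i ∈ s, g i - 1‖ ≤ ∏ i ∈ s, (1 + u i) - 1 := by
  induction s using Finset.cons_induction with
  | empty => simp
  | cons a s ha ih =>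
    rw [Finset.prod_cons, Finset.prod_cons]
    have ha1 : ‖g a - 1‖ ≤ u a := h a (Finset.mem_cons_self a s)
    have hg : ‖g a‖ ≤ 1 + u a := by
      calc ‖g a‖ = ‖(g a - 1) + 1‖ := by ring_nf
        _ ≤ ‖g a - 1‖ + ‖(1:ℂ)‖ := norm_add_le _ _
        _ ≤ u a + 1 := by simpa using ha1
        _ = 1 + u a := by ring
    have hP : (1:ℝ) ≤ ∏ i ∈ s, (1 + u i) := by
      have := Finset.prod_le_prod (f := fun _ : ℕ => (1:ℝ)) (g := fun i => 1 + u i) (s := s)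
        (fun i _ => zero_le_one) (fun i _ => by show (1:ℝ) ≤ 1 + u i; linarith [hu i])
      simpa using this
    have ih' := ih fun i hi => h i (Finset.mem_cons_of_mem hi)
    have hkey : g a * ∏ i ∈ s, g i - 1 = g a * ((∏ i ∈ s, g i) - 1) + (g a - 1) := by ring
    calc ‖g a * ∏ i ∈ s, g i - 1‖
        ≤ ‖g a * ((∏ i ∈ s, g i) - 1)‖ + ‖g a - 1‖ := by
          rw [hkey]; exact norm_add_le _ _
      _ = ‖g a‖ * ‖(∏ i ∈ s, g i) - 1‖ + ‖g a - 1‖ := by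
          rw [norm_mul]
      _ ≤ (1 + u a) * ((∏ i ∈ s, (1 + u i)) - 1) + u a := by
          have := mul_le_mul hg ih' (norm_nonneg _) (by linarith [hu a])
          linarith [ha1, this]
      _ = (1 + u a) * ∏ i ∈ s, (1 + u i) - 1 := by ring

/-- `∏ (1+u) ≤ exp (∑ u)` for `u ≥ 0`. -/
lemma prod_one_add_le_exp (s : Finset ℕ) (u : ℕ → ℝ) (hu : ∀ i, 0 ≤ u i) :
    ∏ i ∈ s, (1 + u i) ≤ Real.exp (∑ i ∈ s, u i) := by
  rw [Real.exp_sum]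
  refine Finset.prod_le_prod (fun i _ => by linarith [hu i]) (fun i _ => ?_)
  have := Real.add_one_le_exp (u i)
  linarith

theorem stmt_4 (N : ℕ) (hN : 0 < N) (a : ℕ → ℤ → ℂ)
    (hsupp : ∀ (k : ℕ) (j : ℤ), (N : ℤ) ≤ |j| → a k j = 0)
    (M : ℝ) (hM : 0 < M)
    (hbound : ∀ (k : ℕ) (ω : ℝ),
      ‖symbol N (a k) (Complex.exp (Complex.I * ω))‖ ≤ M)
    (hsum : Summable fun k : ℕ => ‖(1 / 2) * symbol N (a k) 1 - 1‖) :
    ∃ F : ℝ → ℂ, ∀ s : Set ℝ, IsCompact s →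
      TendstoUniformlyOn
        (fun (K : ℕ) (ω : ℝ) =>
          ∏ k ∈ Finset.range K,
            (1 / 2 : ℂ) * symbol N (a k) (Complex.exp (Complex.I * (ω * (2 : ℝ)^(-(k + 1 : ℤ))))))
        F atTop s := by
  classical
  set f : ℕ → ℝ → ℂ := fun k ω =>
    (1 / 2 : ℂ) * symbol N (a k) (Complex.exp (Complex.I * (ω * (2 : ℝ)^(-(k + 1 : ℤ)))))
    with hf
  show ∃ F : ℝ → ℂ, ∀ s : Set ℝ, IsCompact s →
    TendstoUniformlyOn (fun K ω => ∏ k ∈ Finset.range K, f k ω) F atTop s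
  set P : ℕ → ℝ → ℂ := fun K ω => ∏ k ∈ Finset.range K, f k ω with hP
  set ε : ℕ → ℝ := fun k => ‖(1 / 2) * symbol N (a k) 1 - 1‖ with hε
  have hεnn : ∀ k, 0 ≤ ε k := fun k => norm_nonneg _
  set C : ℝ := (2 * N + 1) * (M * (2 * (N * 1))) with hC
  have hCnn : 0 ≤ C := by positivity
  -- Lipschitz-type bound for the symbol on the circle
  have hdiff : ∀ (k : ℕ) (t : ℝ),
      ‖symbol N (a k) (Complex.exp (Complex.I * t)) - symbol N (a k) 1‖
        ≤ C * |t| := by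
    intro k t
    have hcard : ((Finset.Icc (-(N:ℤ)) (N:ℤ)).card) = 2 * N + 1 := by
      rw [Int.card_Icc]; omega
    rw [symbol, symbol, ← Finset.sum_sub_distrib]
    calc ‖∑ m ∈ Finset.Icc (-(N:ℤ)) (N:ℤ),
            (a k m * Complex.exp (Complex.I * t) ^ m - a k m * (1:ℂ) ^ m)‖
        ≤ ∑ m ∈ Finset.Icc (-(N:ℤ)) (N:ℤ),
            ‖a k m * Complex.exp (Complex.I * t) ^ m - a k m * (1:ℂ) ^ m‖ :=
          norm_sum_le _ _
      _ ≤ ∑ m ∈ Finset.Icc (-(N:ℤ)) (N:ℤ), M * (2 * ((N:ℝ) * |t|)) := by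
          refine Finset.sum_le_sum fun m hm => ?_
          rw [Finset.mem_Icc] at hm
          have hmN : |(m:ℝ)| ≤ (N:ℝ) := by
            rw [abs_le]; constructor <;> [exact_mod_cast hm.1; exact_mod_cast hm.2]
          have hterm : a k m * Complex.exp (Complex.I * t) ^ m - a k m * (1:ℂ) ^ m
              = a k m * (Complex.exp (Complex.I * t) ^ m - 1) := by
            rw [one_zpow]; ring
          rw [hterm, norm_mul]
          have hcoef : ‖a k m‖ ≤ M :=
            coeff_bound N (a k) M (hbound k) m (by rw [Finset.mem_Icc]; exact hm)
          have hz : Complex.exp (Complex.I * t) ^ m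
              = Complex.exp (Complex.I * (((m : ℝ) * t : ℝ) : ℂ)) := by
            rw [← Complex.exp_int_mul]; congr 1; push_cast; ring
          have hzb : ‖Complex.exp (Complex.I * t) ^ m - 1‖ ≤ 2 * ((N:ℝ) * |t|) := by
            rw [hz]
            refine le_trans (expI_sub_one_bound ((m:ℝ) * t)) ?_
            rw [abs_mul]
            nlinarith [abs_nonneg t, abs_nonneg ((m:ℝ))]
          exact mul_le_mul hcoef hzb (norm_nonneg _) hM.le
      _ = C * |t| := by
          rw [Finset.sum_const, hcard, nsmul_eq_mul, hC]
          push_cast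
          ring
  -- uniform bound for the factors on |ω| ≤ R
  set u : ℝ → ℕ → ℝ := fun R k => C * R * (1/2:ℝ)^(k+1) + ε k with hu
  have hfactor : ∀ (k : ℕ) (R ω : ℝ), 0 ≤ R → |ω| ≤ R →
      ‖f k ω - 1‖ ≤ u R k := by
    intro k R ω hR hω
    set t : ℝ := ω * (2:ℝ)^(-(k + 1 : ℤ)) with htdef
    have hpow : (0:ℝ) < (2:ℝ)^(-(k + 1 : ℤ)) := by positivity
    have hpow2 : (2:ℝ)^(-(k + 1 : ℤ)) = (1/2:ℝ)^(k+1) := by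
      rw [zpow_neg, show ((k:ℤ)+1) = ((k + 1 : ℕ) : ℤ) by push_cast; ring, zpow_natCast,
        ← inv_pow]
      norm_num
    have h12 : ‖(1/2 : ℂ)‖ = 1/2 := by
      rw [norm_div, norm_one, Complex.norm_two]
    have hsplit : f k ω - 1
        = (1/2 : ℂ) * (symbol N (a k) (Complex.exp (Complex.I * (t : ℝ)))
            - symbol N (a k) 1) + ((1/2) * symbol N (a k) 1 - 1) := by
      rw [hf, htdef]
      push_cast
      ring
    have ht : |t| ≤ R * (1/2:ℝ)^(k+1) := by
      rw [htdef, abs_mul, abs_of_pos hpow, hpow2]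
      have : (0:ℝ) ≤ (1/2:ℝ)^(k+1) := by positivity
      nlinarith
    calc ‖f k ω - 1‖
        ≤ ‖(1/2 : ℂ) *
            (symbol N (a k) (Complex.exp (Complex.I * (t : ℝ)))
              - symbol N (a k) 1)‖ + ε k := by
          rw [hsplit]; exact norm_add_le _ _
      _ ≤ (1/2) * (C * |t|) + ε k := by
          rw [norm_mul, h12]
          have := hdiff k t
          nlinarith
      _ ≤ C * R * (1/2:ℝ)^(k+1) + ε k := by
          have h2 : C * |t| ≤ C * (R * (1/2:ℝ)^(k+1)) :=
            mul_le_mul_of_nonneg_left ht hCnn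
          have h3 : (0:ℝ) ≤ C * |t| := by positivity
          nlinarith
  have hunn : ∀ (R : ℝ), 0 ≤ R → ∀ k, 0 ≤ u R k := by
    intro R hR k
    have h1 : (0:ℝ) ≤ C * R * (1/2:ℝ)^(k+1) := by positivity
    have h2 := hεnn k
    rw [hu]
    dsimp only
    linarith
  have husum : ∀ R : ℝ, Summable (u R) := by
    intro R
    refine Summable.add ?_ hsum
    have hgeo : Summable (fun k : ℕ => (1/2:ℝ)^(k+1)) := by
      have := (summable_geometric_of_lt_one (by norm_num : (0:ℝ) ≤ 1/2)
        (by norm_num : (1/2:ℝ) < 1)).mul_right (1/2 : ℝ)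
      simpa [pow_succ] using this
    exact hgeo.mul_left (C * R)
  -- uniform Cauchy on closed balls
  have hcauchy : ∀ R : ℝ, 0 ≤ R → UniformCauchySeqOn P atTop (Metric.closedBall 0 R) := by
    intro R hR
    have hS0 : 0 ≤ ∑' k, u R k := tsum_nonneg (hunn R hR)
    set S : ℝ := ∑' k, u R k with hS
    rw [Metric.uniformCauchySeqOn_iff]
    intro e he
    have hq : 0 < e / (2 * Real.exp S) := by positivity
    have hepos : (1:ℝ) < 1 + e / (2 * Real.exp S) := by linarith
    set δ : ℝ := Real.log (1 + e / (2 * Real.exp S)) with hδdef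
    have hδ : 0 < δ := Real.log_pos hepos
    have hcs : CauchySeq (fun n => ∑ i ∈ Finset.range n, u R i) :=
      (husum R).hasSum.tendsto_sum_nat.cauchySeq
    obtain ⟨K₀, hK₀⟩ := Metric.cauchySeq_iff.mp hcs δ hδ
    have main : ∀ m n, K₀ ≤ m → K₀ ≤ n → m ≤ n → ∀ x ∈ Metric.closedBall (0:ℝ) R,
        dist (P n x) (P m x) < e := by
      intro m n hm hn hmn x hx
      have hxR : |x| ≤ R := by
        simpa [Real.dist_eq] using (Metric.mem_closedBall.mp hx)
      have hb : ∀ k, ‖f k x - 1‖ ≤ u R k := fun k => hfactor k R x hR hxR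
      have hIco : ∑ i ∈ Finset.Ico m n, u R i < δ := by
        have hd := hK₀ n hn m hm
        rw [Real.dist_eq] at hd
        rw [Finset.sum_Ico_eq_sub _ hmn]
        calc ∑ i ∈ Finset.range n, u R i - ∑ i ∈ Finset.range m, u R i
            ≤ |∑ i ∈ Finset.range n, u R i - ∑ i ∈ Finset.range m, u R i| := le_abs_self _
          _ < δ := hd
      have hsplit : P n x = P m x * ∏ k ∈ Finset.Ico m n, f k x :=
        (Finset.prod_range_mul_prod_Ico _ hmn).symm
      have habsP : ‖P m x‖ ≤ Real.exp S := by
        have h1 := prod_sub_one_bound (Finset.range m) (fun k => f k x) (u R)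
          (hunn R hR) (fun i _ => hb i)
        have h2 : ∏ i ∈ Finset.range m, (1 + u R i) ≤ Real.exp (∑ i ∈ Finset.range m, u R i) :=
          prod_one_add_le_exp _ _ (hunn R hR)
        have h3 : ∑ i ∈ Finset.range m, u R i ≤ S :=
          Summable.sum_le_tsum _ (fun i _ => hunn R hR i) (husum R)
        have h4 : ‖P m x‖ ≤ ‖P m x - 1‖ + 1 := by
          have := norm_add_le (P m x - 1) 1
          simpa using this
        have h5 := Real.exp_le_exp.mpr h3
        calc ‖P m x‖ ≤ ‖P m x - 1‖ + 1 := h4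
          _ ≤ (∏ i ∈ Finset.range m, (1 + u R i) - 1) + 1 := by linarith [h1]
          _ = ∏ i ∈ Finset.range m, (1 + u R i) := by ring
          _ ≤ Real.exp S := h2.trans h5
      have habsQ : ‖(∏ k ∈ Finset.Ico m n, f k x) - 1‖ ≤ Real.exp δ - 1 := by
        have h1 := prod_sub_one_bound (Finset.Ico m n) (fun k => f k x) (u R)
          (hunn R hR) (fun i _ => hb i)
        have h2 : ∏ i ∈ Finset.Ico m n, (1 + u R i) ≤ Real.exp (∑ i ∈ Finset.Ico m n, u R i) :=
          prod_one_add_le_exp _ _ (hunn R hR)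
        have h3 := Real.exp_le_exp.mpr hIco.le
        calc ‖(∏ k ∈ Finset.Ico m n, f k x) - 1‖
            ≤ ∏ i ∈ Finset.Ico m n, (1 + u R i) - 1 := h1
          _ ≤ Real.exp (∑ i ∈ Finset.Ico m n, u R i) - 1 := by linarith
          _ ≤ Real.exp δ - 1 := by linarith
      have hfin : Real.exp S * (Real.exp δ - 1) = e / 2 := by
        rw [hδdef, Real.exp_log (by linarith : (0:ℝ) < 1 + e / (2 * Real.exp S))]
        have hE := (Real.exp_pos S).ne'
        field_simp
        ring
      calc dist (P n x) (P m x) = ‖P n x - P m x‖ := Complex.dist_eq _ _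
        _ = ‖P m x‖ * ‖(∏ k ∈ Finset.Ico m n, f k x) - 1‖ := by
            rw [hsplit, ← norm_mul]; congr 1; ring
        _ ≤ Real.exp S * (Real.exp δ - 1) :=
            mul_le_mul habsP habsQ (norm_nonneg _) (Real.exp_pos S).le
        _ = e / 2 := hfin
        _ < e := by linarith
    refine ⟨K₀, fun m hm n hn x hx => ?_⟩
    rcases le_total m n with h | h
    · rw [dist_comm]; exact main m n hm hn h x hx
    · exact main n m hn hm h x hx
  -- pointwise limit
  set F : ℝ → ℂ := fun ω => limUnder atTop (fun K => P K ω) with hF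
  have hpt : ∀ ω : ℝ, Tendsto (fun K => P K ω) atTop (𝓝 (F ω)) := by
    intro ω
    have hc : CauchySeq (fun K => P K ω) := by
      rw [Metric.cauchySeq_iff]
      intro e he
      obtain ⟨K₀, h⟩ := Metric.uniformCauchySeqOn_iff.mp (hcauchy |ω| (abs_nonneg ω)) e he
      exact ⟨K₀, fun m hm n hn =>
        h m hm n hn ω (by simp [Metric.mem_closedBall, Real.dist_eq])⟩
    exact hc.tendsto_limUnder
  refine ⟨F, fun s hs => ?_⟩
  obtain ⟨r, hr⟩ := (Metric.isBounded_iff_subset_closedBall (0:ℝ)).mp hs.isBounded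
  have hsub : s ⊆ Metric.closedBall 0 |r| :=
    hr.trans (Metric.closedBall_subset_closedBall (le_abs_self r))
  exact ((hcauchy |r| (abs_nonneg r)).mono hsub).tendstoUniformlyOn_of_tendsto
    (fun ω _ => hpt ω)
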